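/- Let q be an odd prime power with q ≡ 1 (mod 4), let γ be an odd positive divisor of q - 1, and set n = (q-1)/γ with n > 2. Then for every integer l with 0 ≤ l and 4γl ≤ q - 4γ - 1 there exists a negacyclic Hermitian LCD code over F_{q²} of length n, dimension n - 2l - 2 and minimum distance exactly 2l + 3; in particular this code is MDS. -/

import Mathlib

open Finset

/-- The negacyclic shift of a word: `(c_0, ..., c_{n-1}) ↦ (-c_{n-1}, c_0, ..., c_{n-2})`. -/
def negashift {F : Type*} [Neg F] {n : ℕ} (c : Fin n → F) : Fin n → F :=
  fun i =>
    if _h : (i : ℕ) = 0 then -c ⟨n - 1, Nat.sub_lt i.pos Nat.one_pos⟩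
    else c ⟨(i : ℕ) - 1, lt_of_le_of_lt (Nat.sub_le _ _) i.isLt⟩

/-- A linear code `C ≤ F^n` is negacyclic if it is closed under the negacyclic shift. -/
def IsNegacyclic {F : Type*} [Field F] {n : ℕ} (C : Submodule F (Fin n → F)) : Prop :=
  ∀ c ∈ C, negashift c ∈ C

/-- `C` is an LCD code: `C ∩ C^⊥ = {0}` for the Euclidean inner product. -/
def IsLCD {F : Type*} [Field F] {n : ℕ} (C : Submodule F (Fin n → F)) : Prop :=
  ∀ x ∈ C, (∀ y ∈ C, ∑ i, x i * y i = 0) → x = 0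

/-- `C` is a Hermitian LCD code: `C ∩ C^{⊥H} = {0}` for the Hermitian inner product
`⟨x, y⟩ = ∑ x_i y_i^q`. -/
def IsHermLCD (q : ℕ) {F : Type*} [Field F] {n : ℕ} (C : Submodule F (Fin n → F)) : Prop :=
  ∀ x ∈ C, (∀ y ∈ C, ∑ i, x i * (y i) ^ q = 0) → x = 0

open scoped Classical in
/-- The Hamming weight of a word. -/
noncomputable def wt {F : Type*} [Zero F] {n : ℕ} (c : Fin n → F) : ℕ :=
  (Finset.univ.filter fun i => c i ≠ 0).card

/-- The minimum distance of the code `C` is exactly `d`: `d` is the least Hamming weight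
of a nonzero codeword. -/
def HasMinDist {F : Type*} [Zero F] {n : ℕ} (C : Set (Fin n → F)) (d : ℕ) : Prop :=
  IsLeast {w : ℕ | ∃ c ∈ C, c ≠ 0 ∧ wt c = w} d

lemma wt_eq_of {F : Type*} [Zero F] {n : ℕ} (c : Fin n → F) (s : Finset (Fin n))
    (h : ∀ i, c i = 0 ↔ i ∈ s) : wt c = n - s.card := by
  classical
  unfold wt
  have h1 : (Finset.univ.filter fun i : Fin n => c i ≠ 0) = Finset.univ \ s := by
    ext i; simp [h i]
  rw [h1, Finset.card_sdiff_of_subset (Finset.subset_univ s), Finset.card_univ, Fintype.card_fin]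

lemma nat_dvd_between {n x : ℕ} (h : n ∣ x) (h0 : 0 < x) (h2 : x < 2 * n) : x = n := by
  obtain ⟨c, rfl⟩ := h
  match c with
  | 0 => omega
  | 1 => exact mul_one n
  | (c + 2) =>
    have h3 : n * 2 ≤ n * (c + 2) := Nat.mul_le_mul_left n (by omega)
    omega

lemma geom_zero {E : Type*} [Field E] {t : E} (h1 : t ≠ 1) {n : ℕ} (hn : t ^ n = 1) :
    ∑ i ∈ Finset.range n, t ^ i = 0 := by
  rw [geom_sum_eq h1, hn, sub_self, zero_div]

lemma negashift_zero {F : Type*} [Field F] {n : ℕ} :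
    negashift (0 : Fin n → F) = 0 := by
  funext i
  simp only [negashift, Pi.zero_apply]
  split <;> simp

lemma negashift_add {F : Type*} [Field F] {n : ℕ} (x y : Fin n → F) :
    negashift (x + y) = negashift x + negashift y := by
  funext i
  simp only [negashift, Pi.add_apply]
  split <;> ring

lemma negashift_smul {F : Type*} [Field F] {n : ℕ} (a : F) (x : Fin n → F) :
    negashift (a • x) = a • negashift x := by
  funext i
  simp only [negashift, Pi.smul_apply, smul_eq_mul]
  split <;> ring

theorem stmt_10 (q : ℕ) (hq : IsPrimePow q) (hqodd : Odd q) (hmod : q % 4 = 1)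
    (E : Type) [Field E] [Fintype E] (hE : Fintype.card E = q ^ 2)
    (γ : ℕ) (hγ : 0 < γ) (hγpar : Odd γ) (hdvd : γ ∣ q - 1)
    (n : ℕ) (hn : n = (q - 1) / γ) (hn2 : 2 < n)
    (l : ℕ) (hl : 4 * γ * l + 4 * γ + 1 ≤ q) :
    ∃ C : Submodule E (Fin n → E),
      IsNegacyclic C ∧ IsHermLCD q C ∧
      Module.finrank E C = n - 2 * l - 2 ∧
      HasMinDist (C : Set (Fin n → E)) (2 * l + 3) := by
  classical
  haveI : NeZero n := ⟨by omega⟩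
  -- arithmetic groundwork
  have hq1 : 1 ≤ q := le_trans (by omega) hl
  have hq5 : 5 ≤ q := by
    have h4 : 4 * γ ≤ 4 * γ * l + 4 * γ := Nat.le_add_left _ _
    have h5 : 4 * 1 ≤ 4 * γ := Nat.mul_le_mul_left 4 hγ
    omega
  have hqn : q - 1 = γ * n := by rw [hn, Nat.mul_div_cancel' hdvd]
  have hqeq : q = γ * n + 1 := by omega
  have hq2 : q % 2 = 1 := Nat.odd_iff.mp hqodd
  have h4n : 4 ∣ n := by
    have h41 : 4 ∣ γ * n := by omega
    have hcop : Nat.Coprime 4 γ := by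
      have h2 : Nat.Coprime 2 γ := Nat.coprime_two_left.mpr hγpar
      have h3 := h2.pow_left 2
      norm_num at h3
      exact h3
    exact hcop.dvd_of_dvd_mul_left h41
  obtain ⟨m, hm⟩ : ∃ m, n = 4 * m := ⟨n / 4, (Nat.mul_div_cancel' h4n).symm⟩
  have hln : 4 * l + 4 ≤ n := by
    have h1 : γ * (4 * l + 4) ≤ γ * n := by
      have h2 : γ * (4 * l + 4) = 4 * γ * l + 4 * γ := by ring
      omega
    exact Nat.le_of_mul_le_mul_left h1 hγ
  obtain ⟨k, hk⟩ : ∃ k, k = n - 2 * l - 2 := ⟨_, rfl⟩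
  have hk2 : 2 ≤ k := by omega
  have hkn : k + 2 * l + 2 = n := by omega
  -- the primitive 2n-th root of unity
  have hcardu : Fintype.card Eˣ = q ^ 2 - 1 := by rw [Fintype.card_units, hE]
  obtain ⟨g, hg⟩ := IsCyclic.exists_ofOrder_eq_natCard (α := Eˣ)
  have hgo : orderOf g = q ^ 2 - 1 := by rw [hg, Nat.card_eq_fintype_card, hcardu]
  have hq2ne : 2 ≤ q ^ 2 := by
    have : 5 * 5 ≤ q * q := Nat.mul_le_mul hq5 hq5
    have h2 : q ^ 2 = q * q := sq q
    omega
  have hdvd2n : 2 * n ∣ q ^ 2 - 1 := by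
    obtain ⟨s, hs⟩ : ∃ s, q + 1 = 2 * s := ⟨(q + 1) / 2, by omega⟩
    refine ⟨γ * s, ?_⟩
    have hq2' : q ^ 2 - 1 = (q - 1) * (q + 1) := by
      obtain ⟨m', rfl⟩ : ∃ m', q = m' + 1 := ⟨q - 1, by omega⟩
      have h3 : (m' + 1) ^ 2 = m' * (m' + 2) + 1 := by ring
      have h4 : (m' + 1 - 1) * (m' + 1 + 1) = m' * (m' + 2) := by
        simp only [Nat.add_sub_cancel]; try ring
      omega
    rw [hq2', hqn, hs]; ring
  obtain ⟨α, horder⟩ : ∃ α : Eˣ, orderOf α = 2 * n := by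
    refine ⟨g ^ (orderOf g / (2 * n)), ?_⟩
    exact orderOf_pow_orderOf_div (by rw [hgo]; omega) (by rw [hgo]; exact hdvd2n)
  have hu : ∀ s : ℕ, (α : E) ^ s = ((α ^ s : Eˣ) : E) := fun s =>
    (Units.val_pow_eq_pow_val α s).symm
  have hpow1 : ∀ s : ℕ, (α : E) ^ s = 1 ↔ 2 * n ∣ s := by
    intro s
    rw [hu s, Units.val_eq_one, ← horder]
    exact orderOf_dvd_iff_pow_eq_one.symm
  have ha2n : (α : E) ^ (2 * n) = 1 := (hpow1 _).mpr dvd_rfl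
  have han : (α : E) ^ n = -1 := by
    have h2 : (α : E) ^ n * (α : E) ^ n = 1 := by
      rw [← pow_add, show n + n = 2 * n by ring]; exact ha2n
    rcases mul_self_eq_one_iff.mp h2 with h | h
    · exfalso
      have h3 := (hpow1 n).mp h
      have h4 := Nat.le_of_dvd (by omega) h3
      omega
    · exact h
  have hane : (α : E) ≠ 0 := Units.ne_zero α
  have hains : ∀ s t : ℕ, (α : E) ^ s = (α : E) ^ t → s ≡ t [MOD 2 * n] := by
    intro s t hst
    have h2 : (α ^ s : Eˣ) = α ^ t := Units.ext (by rw [← hu, ← hu]; exact hst)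
    have h3 := pow_eq_pow_iff_modEq.mp h2
    rwa [horder] at h3
  -- the definitions
  obtain ⟨b, hb⟩ : ∃ b, b = m + l + 1 := ⟨_, rfl⟩
  obtain ⟨e, he⟩ : ∃ e : ℕ → ℕ, e = fun j => 2 * (b + j) + 1 := ⟨_, rfl⟩
  obtain ⟨w, hwdef⟩ : ∃ w : Fin k → Fin n → E,
      w = fun (j : Fin k) (i : Fin n) => (α : E) ^ (e (j : ℕ) * (i : ℕ)) := ⟨_, rfl⟩
  have hw_apply : ∀ (j : Fin k) (i : Fin n), w j i = (α : E) ^ (e (j : ℕ) * (i : ℕ)) := by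
    intro j i; rw [hwdef]
  have he_odd : ∀ j : ℕ, Odd (e j) := by
    intro j; rw [he]; exact ⟨b + j, by ring⟩
  -- key arithmetic equivalence
  have hkey : ∀ j j' : ℕ, j < k → j' < k → (2 * n ∣ e j + q * e j' ↔ j + j' = k - 1) := by
    intro j j' hj hj'
    obtain ⟨G, hG⟩ : ∃ G, γ * e j' = 2 * G + 1 := by
      obtain ⟨G, hG⟩ := hγpar.mul (he_odd j')
      exact ⟨G, by omega⟩
    have hX : e j + q * e j' = 2 * n * (1 + G) + 2 * (j + j' + 2 * l + 3) := by
      have h2 : e j + q * e j' = (e j + e j') + n * (γ * e j') := by rw [hqeq]; ring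
      rw [h2, hG]
      simp only [he]
      rw [hb, hm]
      ring
    rw [hX]
    rw [Nat.dvd_add_right (Dvd.intro _ rfl)]
    rw [Nat.mul_dvd_mul_iff_left (show 0 < 2 by norm_num)]
    constructor
    · intro h
      have hlt : j + j' + 2 * l + 3 < 2 * n := by omega
      have h6 := nat_dvd_between h (by omega) hlt
      omega
    · intro h
      have h7 : j + j' + 2 * l + 3 = n := by omega
      exact h7 ▸ dvd_refl n
  -- Gram matrix computation
  have hgram : ∀ j j' : Fin k, (∑ i : Fin n, w j i * (w j' i) ^ q)
      = if (j : ℕ) + (j' : ℕ) = k - 1 then (n : E) else 0 := by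
    intro j j'
    have hterm : ∀ i : Fin n, w j i * (w j' i) ^ q
        = ((α : E) ^ (e (j : ℕ) + q * e (j' : ℕ))) ^ (i : ℕ) := by
      intro i
      have h1 : (w j' i) ^ q = (α : E) ^ (e (j' : ℕ) * (i : ℕ) * q) := by
        rw [hw_apply, ← pow_mul]
      rw [hw_apply, h1, ← pow_add, ← pow_mul]
      congr 1; ring
    rw [Finset.sum_congr rfl (fun i _ => hterm i)]
    rw [Fin.sum_univ_eq_sum_range (fun i => ((α : E) ^ (e (j : ℕ) + q * e (j' : ℕ))) ^ i) n]
    by_cases hd : 2 * n ∣ e (j : ℕ) + q * e (j' : ℕ)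
    · rw [if_pos ((hkey _ _ j.isLt j'.isLt).mp hd)]
      rw [(hpow1 _).mpr hd]
      simp
    · rw [if_neg (fun hc => hd ((hkey _ _ j.isLt j'.isLt).mpr hc))]
      apply geom_zero
      · intro h1; exact hd ((hpow1 _).mp h1)
      · rw [← pow_mul, mul_comm, pow_mul, han]
        exact ((he_odd _).add_odd (hqodd.mul (he_odd _))).neg_one_pow
  -- n is nonzero in E
  have hnE : (n : E) ≠ 0 := by
    intro h0
    have hqE : (q : E) = 0 := by
      have h1 := FiniteField.cast_card_eq_zero E
      rw [hE] at h1
      push_cast at h1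
      exact pow_eq_zero_iff (n := 2) (by norm_num) |>.mp h1
    haveI := ringChar.charP E
    have hpP : (ringChar E).Prime := CharP.char_is_prime E (ringChar E)
    have hdq : ringChar E ∣ q := (CharP.cast_eq_zero_iff E (ringChar E) q).mp hqE
    have hdn : ringChar E ∣ n := (CharP.cast_eq_zero_iff E (ringChar E) n).mp h0
    have hdq1 : ringChar E ∣ q - 1 := hqn ▸ hdn.mul_left γ
    have h2 : ringChar E ∣ 1 := by
      have h3 := Nat.dvd_sub hdq hdq1
      rwa [show q - (q - 1) = 1 by omega] at h3
    have h4 := Nat.le_of_dvd one_pos h2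
    have h5 := hpP.two_le
    omega
  -- injectivity of exponents
  have hkdvd : ∀ j j' : ℕ, e j ≡ e j' [MOD 2 * n] → (n : ℤ) ∣ (j' : ℤ) - (j : ℤ) := by
    intro j j' h
    have h5 := h.dvd
    have heq : ((e j' : ℕ) : ℤ) - ((e j : ℕ) : ℤ) = 2 * ((j' : ℤ) - (j : ℤ)) := by
      simp only [he]; push_cast; ring
    rw [heq] at h5
    push_cast at h5
    exact (mul_dvd_mul_iff_left (by norm_num : (2 : ℤ) ≠ 0)).mp h5
  have hinj : Function.Injective (fun j : Fin k => (α : E) ^ (e (j : ℕ))) := by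
    intro j j' hjj
    have h1 := hkdvd _ _ (hains _ _ hjj)
    have h2 := Int.eq_zero_of_dvd_of_natAbs_lt_natAbs h1
      (by have := j.isLt; have := j'.isLt; omega)
    exact Fin.ext (by omega)
  have hβinj : ∀ i i' : Fin n, (α : E) ^ (2 * (i : ℕ)) = (α : E) ^ (2 * (i' : ℕ)) → i = i' := by
    intro i i' hii
    have h := (hains _ _ hii).dvd
    have h5 : ((2 * (i' : ℕ) : ℕ) : ℤ) - ((2 * (i : ℕ) : ℕ) : ℤ)
        = 2 * (((i' : ℕ) : ℤ) - ((i : ℕ) : ℤ)) := by push_cast; ring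
    rw [h5] at h
    push_cast at h
    have h6 := (mul_dvd_mul_iff_left (by norm_num : (2 : ℤ) ≠ 0)).mp h
    have h7 := Int.eq_zero_of_dvd_of_natAbs_lt_natAbs h6
      (by have := i.isLt; have := i'.isLt; omega)
    exact Fin.ext (by omega)
  -- evaluation formula
  have heval : ∀ (a : Fin k → E) (i : Fin n),
      (∑ j, a j • w j) i
        = (α : E) ^ ((2 * b + 1) * (i : ℕ)) *
          (∑ j : Fin k, Polynomial.C (a j) * Polynomial.X ^ (j : ℕ)).eval
            ((α : E) ^ (2 * (i : ℕ))) := by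
    intro a i
    rw [Polynomial.eval_finset_sum]
    simp only [Polynomial.eval_mul, Polynomial.eval_pow, Polynomial.eval_C, Polynomial.eval_X]
    rw [Finset.mul_sum]
    simp only [Finset.sum_apply, Pi.smul_apply, smul_eq_mul]
    refine Finset.sum_congr rfl (fun j _ => ?_)
    rw [hw_apply j i, ← pow_mul]
    have hexp : e (j : ℕ) * (i : ℕ) = (2 * b + 1) * (i : ℕ) + 2 * (i : ℕ) * (j : ℕ) := by
      simp only [he]; ring
    rw [hexp, pow_add]
    ring
  refine ⟨Submodule.span E (Set.range w), ?_, ?_, ?_, ?_⟩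
  -- (1) negacyclic
  · intro c hc
    induction hc using Submodule.span_induction with
    | mem x hx =>
      obtain ⟨j, rfl⟩ := hx
      have hshift : negashift (w j) = ((α : E) ^ (e (j : ℕ) * (2 * n - 1))) • w j := by
        funext i
        simp only [negashift, Pi.smul_apply, smul_eq_mul]
        split
        · next h0 =>
          rw [hw_apply, hw_apply, h0, Nat.mul_zero, pow_zero, mul_one]
          simp only [Fin.val_mk]
          have hsplit : e (j : ℕ) * (2 * n - 1) = n * e (j : ℕ) + e (j : ℕ) * (n - 1) := by
            have : 2 * n - 1 = n + (n - 1) := by omega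
            rw [this]; ring
          rw [hsplit, pow_add, pow_mul (α : E) n (e (j : ℕ)), han,
            (he_odd (j : ℕ)).neg_one_pow, neg_one_mul]
        · next h0 =>
          rw [hw_apply, hw_apply, ← pow_add]
          simp only [Fin.val_mk]
          have h2 : e (j : ℕ) * (2 * n - 1) + e (j : ℕ) * (i : ℕ)
              = e (j : ℕ) * ((i : ℕ) - 1) + e (j : ℕ) * (2 * n) := by
            rw [← Nat.mul_add, ← Nat.mul_add]
            congr 1
            omega
          rw [h2, mul_comm (e (j : ℕ)) (2 * n), pow_add,
            pow_mul (α : E) (2 * n) (e (j : ℕ)), ha2n, one_pow, mul_one]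
      rw [hshift]
      exact Submodule.smul_mem _ _ (Submodule.subset_span ⟨j, rfl⟩)
    | zero => rw [negashift_zero]; exact Submodule.zero_mem _
    | add x y hx hy ihx ihy => rw [negashift_add]; exact Submodule.add_mem _ ihx ihy
    | smul a x hx ih => rw [negashift_smul]; exact Submodule.smul_mem _ _ ih
  -- (2) Hermitian LCD
  · intro x hx hperp
    obtain ⟨a, ha⟩ := (Submodule.mem_span_range_iff_exists_fun E).mp hx
    have hrev : ∀ j' : Fin k, a ⟨k - 1 - (j' : ℕ), by omega⟩ * (n : E) = 0 := by
      intro j'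
      have hj' := j'.isLt
      have h1 := hperp (w j') (Submodule.subset_span ⟨j', rfl⟩)
      rw [← ha] at h1
      have h2 : (∑ i : Fin n, (∑ j : Fin k, a j • w j) i * (w j' i) ^ q)
          = ∑ j : Fin k, a j * ∑ i : Fin n, w j i * (w j' i) ^ q := by
        simp only [Finset.sum_apply, Pi.smul_apply, smul_eq_mul, Finset.sum_mul,
          Finset.mul_sum, mul_assoc]
        exact Finset.sum_comm
      rw [h2] at h1
      have h3 : (∑ j : Fin k, a j * ∑ i : Fin n, w j i * (w j' i) ^ q)
          = a ⟨k - 1 - (j' : ℕ), by omega⟩ * (n : E) := by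
        rw [Finset.sum_congr rfl (fun j _ => by rw [hgram j j'])]
        rw [Finset.sum_eq_single (⟨k - 1 - (j' : ℕ), by omega⟩ : Fin k)]
        · rw [if_pos (by simp only [Fin.val_mk]; omega)]
        · intro j _ hne
          rw [if_neg, mul_zero]
          intro hcon
          apply hne
          apply Fin.ext
          simp only [Fin.val_mk]
          omega
        · intro hmem; exact absurd (Finset.mem_univ _) hmem
      rw [h3] at h1
      exact h1
    have hzero : ∀ j : Fin k, a j = 0 := by
      intro j
      have hj := j.isLt
      have h1 := hrev ⟨k - 1 - (j : ℕ), by omega⟩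
      have hjj : (⟨k - 1 - (k - 1 - (j : ℕ)), by omega⟩ : Fin k) = j :=
        Fin.ext (by simp only [Fin.val_mk]; omega)
      rw [show (⟨k - 1 - ((⟨k - 1 - (j : ℕ), by omega⟩ : Fin k) : ℕ), by omega⟩ : Fin k)
          = j from Fin.ext (by simp only [Fin.val_mk]; omega)] at h1
      rcases mul_eq_zero.mp h1 with h | h
      · exact h
      · exact absurd h hnE
    rw [← ha]
    exact funext fun i => by
      simp only [Finset.sum_apply, Pi.smul_apply, smul_eq_mul, Pi.zero_apply]
      exact Finset.sum_eq_zero fun j _ => by rw [hzero j, zero_mul]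
  -- (3) dimension
  · have hLI : LinearIndependent E w := by
      rw [Fintype.linearIndependent_iff]
      intro c hc
      have hvan : ∀ i : Fin k, ∑ j : Fin k, c j *
          ((fun j : Fin k => (α : E) ^ (e (j : ℕ))) j) ^ (i : ℕ) = 0 := by
        intro i
        have h1 := congrFun hc (⟨(i : ℕ), lt_of_lt_of_le i.isLt (by omega)⟩ : Fin n)
        simp only [Finset.sum_apply, Pi.smul_apply, smul_eq_mul, Pi.zero_apply] at h1
        rw [← h1]
        refine Finset.sum_congr rfl (fun j _ => ?_)
        rw [hw_apply, ← pow_mul]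
      have h2 := Matrix.eq_zero_of_forall_pow_sum_mul_pow_eq_zero hinj hvan
      exact fun j => congrFun h2 j
    rw [finrank_span_eq_card hLI, Fintype.card_fin]
    omega
  -- (4) minimum distance
  · constructor
    -- a word of weight exactly 2l+3
    · obtain ⟨Q, hQ⟩ : ∃ Q : Polynomial E,
          Q = ∏ t ∈ Finset.Icc 1 (k - 1),
            (Polynomial.X - Polynomial.C ((α : E) ^ (2 * t))) := ⟨_, rfl⟩
      have hQdeg : Q.natDegree ≤ k - 1 := by
        rw [hQ]
        refine le_trans (Polynomial.natDegree_prod_le _ _) ?_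
        have h1 : ∀ t ∈ Finset.Icc 1 (k - 1),
            (Polynomial.X - Polynomial.C ((α : E) ^ (2 * t))).natDegree = 1 := fun t _ =>
          Polynomial.natDegree_X_sub_C _
        rw [Finset.sum_congr rfl h1, Finset.sum_const, smul_eq_mul, mul_one, Nat.card_Icc]
        omega
      obtain ⟨a0, ha0⟩ : ∃ a0 : Fin k → E, a0 = fun (j : Fin k) => Q.coeff (j : ℕ) := ⟨_, rfl⟩
      have hsum_eq : ∀ x : E,
          (∑ j : Fin k, Polynomial.C (a0 j) * Polynomial.X ^ (j : ℕ)).eval x = Q.eval x := by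
        intro x
        rw [Polynomial.eval_finset_sum]
        simp only [Polynomial.eval_mul, Polynomial.eval_pow, Polynomial.eval_C,
          Polynomial.eval_X, ha0]
        rw [Polynomial.eval_eq_sum_range' (show Q.natDegree < k by omega) x]
        exact Fin.sum_univ_eq_sum_range (fun j => Q.coeff j * x ^ j) k
      have hc0 : ∀ i : Fin n, (∑ j, a0 j • w j) i
          = (α : E) ^ ((2 * b + 1) * (i : ℕ)) * Q.eval ((α : E) ^ (2 * (i : ℕ))) := by
        intro i
        rw [heval a0 i, hsum_eq]
      have hQev : ∀ x : E, Q.eval x = ∏ t ∈ Finset.Icc 1 (k - 1), (x - (α : E) ^ (2 * t)) := by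
        intro x
        rw [hQ, Polynomial.eval_prod]
        exact Finset.prod_congr rfl fun t _ => by
          rw [Polynomial.eval_sub, Polynomial.eval_X, Polynomial.eval_C]
      have hziff : ∀ i : Fin n, ((∑ j, a0 j • w j) i = 0 ↔ (i : ℕ) ∈ Finset.Icc 1 (k - 1)) := by
        intro i
        rw [hc0 i, mul_eq_zero]
        constructor
        · intro hcase
          rcases hcase with h | h
          · exact absurd h (pow_ne_zero _ hane)
          · rw [hQev] at h
            obtain ⟨t, ht, ht0⟩ := Finset.prod_eq_zero_iff.mp h
            have htlt : t < n := by
              have := Finset.mem_Icc.mp ht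
              omega
            have h2 : i = (⟨t, htlt⟩ : Fin n) := hβinj _ _ (by
              rw [sub_eq_zero] at ht0
              simpa using ht0)
            rw [h2]
            simpa using ht
        · intro hi
          right
          rw [hQev]
          exact Finset.prod_eq_zero hi (by rw [sub_self])
      refine ⟨∑ j, a0 j • w j, ?_, ?_, ?_⟩
      · exact Submodule.sum_mem _ fun j _ =>
          Submodule.smul_mem _ _ (Submodule.subset_span ⟨j, rfl⟩)
      · intro hzero
        have h1 := (hziff 0).mp (by rw [hzero]; rfl)
        simp only [Fin.val_zero, Finset.mem_Icc] at h1
        omega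
      · obtain ⟨s, hsdef⟩ : ∃ s : Finset (Fin n),
            s = Finset.univ.filter fun i : Fin n => (i : ℕ) ∈ Finset.Icc 1 (k - 1) := ⟨_, rfl⟩
        have hcard : s.card = k - 1 := by
          have hbij : s.card = (Finset.Icc 1 (k - 1)).card := by
            rw [hsdef]
            apply Finset.card_bij (fun (i : Fin n) _ => (i : ℕ))
            · intro i hi
              exact (Finset.mem_filter.mp hi).2
            · intro i _ i' _ hii
              exact Fin.ext hii
            · intro t ht
              have htlt : t < n := by
                have := Finset.mem_Icc.mp ht
                omega
              exact ⟨⟨t, htlt⟩, Finset.mem_filter.mpr ⟨Finset.mem_univ _, ht⟩, rfl⟩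
          rw [hbij, Nat.card_Icc]
          omega
        rw [wt_eq_of _ s (fun i => by
          rw [hziff i, hsdef, Finset.mem_filter]
          exact ⟨fun h => ⟨Finset.mem_univ _, h⟩, fun h => h.2⟩)]
        omega
    -- the lower bound
    · rintro d ⟨c, hcC, hcne, rfl⟩
      obtain ⟨a, ha⟩ := (Submodule.mem_span_range_iff_exists_fun E).mp hcC
      obtain ⟨P, hP⟩ : ∃ P : Polynomial E,
          P = ∑ j : Fin k, Polynomial.C (a j) * Polynomial.X ^ (j : ℕ) := ⟨_, rfl⟩
      have hceval : ∀ i : Fin n,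
          c i = (α : E) ^ ((2 * b + 1) * (i : ℕ)) * P.eval ((α : E) ^ (2 * (i : ℕ))) := by
        intro i
        rw [← ha, heval a i, hP]
      have hPne : P ≠ 0 := by
        intro hP0
        apply hcne
        funext i
        rw [hceval i, hP0, Polynomial.eval_zero, mul_zero]
        rfl
      have hPdeg : P.natDegree ≤ k - 1 := by
        rw [hP]
        refine Polynomial.natDegree_sum_le_of_forall_le _ _ fun j _ => ?_
        refine le_trans (Polynomial.natDegree_C_mul_le _ _) ?_
        rw [Polynomial.natDegree_X_pow]
        have := j.isLt
        omega
      obtain ⟨Z, hZ⟩ : ∃ Z : Finset (Fin n),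
          Z = Finset.univ.filter fun i : Fin n => c i = 0 := ⟨_, rfl⟩
      have hZcard : Z.card ≤ k - 1 := by
        have h1 : Z.card ≤ P.roots.toFinset.card := by
          apply Finset.card_le_card_of_injOn (fun i : Fin n => (α : E) ^ (2 * (i : ℕ)))
          · intro i hi
            rw [hZ, Finset.mem_coe, Finset.mem_filter] at hi
            rw [Finset.mem_coe, Multiset.mem_toFinset, Polynomial.mem_roots hPne]
            have h2 := hi.2
            rw [hceval i] at h2
            rcases mul_eq_zero.mp h2 with h | h
            · exact absurd h (pow_ne_zero _ hane)
            · exact h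
          · intro i _ i' _ hii
            exact hβinj _ _ hii
        refine le_trans h1 (le_trans (Multiset.toFinset_card_le _) ?_)
        exact le_trans (Polynomial.card_roots' P) hPdeg
      have hwtc : wt c = n - Z.card := wt_eq_of c Z (fun i => by
        rw [hZ, Finset.mem_filter]
        exact ⟨fun h => ⟨Finset.mem_univ _, h⟩, fun h => h.2⟩)
      rw [hwtc]
      omega
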